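/- Let H be a graded connected Hopf algebra with grading operator Y (Y(x) = n·x for x homogeneous of degree n), and let γ be a character of H with values in a commutative algebra A. Then the Dynkin-type element R̃(γ) = γ^{⋆−1} ⋆ (γ ∘ Y) is an infinitesimal character: R̃(γ)(xy) = R̃(γ)(x)·ε(y) + ε(x)·R̃(γ)(y) for all x, y ∈ H. -/

import Mathlib

open TensorProduct

variable {k H A : Type*} [CommRing k] [CommRing H] [HopfAlgebra k H]
  [CommRing A] [Algebra k A]

/-- The convolution product `α ⋆ β = m_A ∘ (α ⊗ β) ∘ Δ` on linear maps `H → A`. -/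
noncomputable def conv (α β : H →ₗ[k] A) : H →ₗ[k] A :=
  LinearMap.mul' k A ∘ₗ TensorProduct.map α β ∘ₗ Coalgebra.comul

section AuxAntipode

open Coalgebra HopfAlgebra

/-- A representation of `a * b` built from representations of `a` and `b`. -/
noncomputable def reprMul {ι κ : Type*} {a b : H} (ra : Coalgebra.Repr k a ι)
    (rb : Coalgebra.Repr k b κ) : Coalgebra.Repr k (a * b) (ι × κ) where
  index := ra.index ×ˢ rb.index
  left := fun p => ra.left p.1 * rb.left p.2
  right := fun p => ra.right p.1 * rb.right p.2
  eq := by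
    rw [Bialgebra.comul_mul, ← ra.eq, ← rb.eq, Finset.sum_mul_sum]
    rw [Finset.sum_product]
    simp [Algebra.TensorProduct.tmul_mul_tmul]

lemma repr_sum_counit_left_smul {ι : Type*} {a : H} (r : Coalgebra.Repr k a ι) :
    ∑ i ∈ r.index, counit (R := k) (r.left i) • r.right i = a := by
  have h := congr(TensorProduct.lid k H $(Coalgebra.sum_counit_tmul_eq (R := k) r))
  simp only [map_sum, TensorProduct.lid_tmul, one_smul] at h
  exact h

lemma repr_sum_counit_right_smul {ι : Type*} {a : H} (r : Coalgebra.Repr k a ι) :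
    ∑ i ∈ r.index, counit (R := k) (r.right i) • r.left i = a := by
  have h := congr(TensorProduct.rid k H $(Coalgebra.sum_tmul_counit_eq (R := k) r))
  simp only [map_sum, TensorProduct.rid_tmul, one_smul] at h
  exact h


lemma sum4_comm {M : Type*} [AddCommMonoid M] {α β γ' δ : Type*}
    (s : Finset α) (t : α → Finset β) (u : Finset γ') (v : γ' → Finset δ)
    (f : α → β → γ' → δ → M) :
    ∑ a ∈ s, ∑ b ∈ t a, ∑ c ∈ u, ∑ d ∈ v c, f a b c d
      = ∑ c ∈ u, ∑ d ∈ v c, ∑ a ∈ s, ∑ b ∈ t a, f a b c d := by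
  calc ∑ a ∈ s, ∑ b ∈ t a, ∑ c ∈ u, ∑ d ∈ v c, f a b c d
      = ∑ a ∈ s, ∑ c ∈ u, ∑ b ∈ t a, ∑ d ∈ v c, f a b c d :=
        Finset.sum_congr rfl fun a _ => Finset.sum_comm
    _ = ∑ c ∈ u, ∑ a ∈ s, ∑ b ∈ t a, ∑ d ∈ v c, f a b c d := Finset.sum_comm
    _ = ∑ c ∈ u, ∑ a ∈ s, ∑ d ∈ v c, ∑ b ∈ t a, f a b c d :=
        Finset.sum_congr rfl fun c _ => Finset.sum_congr rfl fun a _ => Finset.sum_comm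
    _ = ∑ c ∈ u, ∑ d ∈ v c, ∑ a ∈ s, ∑ b ∈ t a, f a b c d :=
        Finset.sum_congr rfl fun c _ => Finset.sum_comm

/-- For a character `γ` with values in a commutative algebra, `γ ∘ S` is multiplicative. -/
lemma gamma_antipode_mul (γ : H →ₐ[k] A) (a b : H) :
    γ (antipode (R := k) (a * b)) =
      γ (antipode (R := k) a) * γ (antipode (R := k) b) := by
  classical
  set S : H →ₗ[k] H := antipode (R := k) with hS
  let ra := Coalgebra.Repr.arbitrary k a
  let rb := Coalgebra.Repr.arbitrary k b
  let ra1 : (i : ra.ι) → Coalgebra.Repr k (ra.left i) (H × H) := fun i => Coalgebra.Repr.arbitrary k _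
  let ra2 : (i : ra.ι) → Coalgebra.Repr k (ra.right i) (H × H) := fun i => Coalgebra.Repr.arbitrary k _
  let rb1 : (j : rb.ι) → Coalgebra.Repr k (rb.left j) (H × H) := fun j => Coalgebra.Repr.arbitrary k _
  let rb2 : (j : rb.ι) → Coalgebra.Repr k (rb.right j) (H × H) := fun j => Coalgebra.Repr.arbitrary k _
  -- the three-fold multiplication on A ⊗ (A ⊗ A)
  set μ3 : A ⊗[k] (A ⊗[k] A) →ₗ[k] A :=
    LinearMap.mul' k A ∘ₗ TensorProduct.map LinearMap.id (LinearMap.mul' k A) with hμ3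
  have hμ3t : ∀ x y z : A, μ3 (x ⊗ₜ (y ⊗ₜ z)) = x * (y * z) := by
    intro x y z; simp [hμ3]
  -- coassociativity shuffle for `a`
  have key_a : ∀ v w : H,
      ∑ i ∈ ra.index, ∑ p ∈ (ra2 i).index,
        γ (S (ra.left i * v)) * (γ ((ra2 i).left p * w) * γ (S ((ra2 i).right p)))
      = ∑ i ∈ ra.index, ∑ p ∈ (ra1 i).index,
        γ (S ((ra1 i).left p * v)) * (γ ((ra1 i).right p * w) * γ (S (ra.right i))) := by
    intro v w
    have h := Coalgebra.sum_map_tmul_tmul_eq (R := k)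
      (γ.toLinearMap ∘ₗ S ∘ₗ LinearMap.mulRight k v)
      (γ.toLinearMap ∘ₗ LinearMap.mulRight k w)
      (γ.toLinearMap ∘ₗ S) a (repr := ra) (a₁ := ra1) (a₂ := ra2)
    have h2 := congr(μ3 $h)
    simpa only [map_sum, hμ3t, LinearMap.coe_comp, Function.comp_apply,
      LinearMap.mulRight_apply, AlgHom.toLinearMap_apply] using h2
  -- coassociativity shuffle for `b`
  have key_b : ∀ v w : H,
      ∑ j ∈ rb.index, ∑ q ∈ (rb2 j).index,
        γ (S (v * rb.left j)) * (γ (w * (rb2 j).left q) * γ (S ((rb2 j).right q)))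
      = ∑ j ∈ rb.index, ∑ q ∈ (rb1 j).index,
        γ (S (v * (rb1 j).left q)) * (γ (w * (rb1 j).right q) * γ (S (rb.right j))) := by
    intro v w
    have h := Coalgebra.sum_map_tmul_tmul_eq (R := k)
      (γ.toLinearMap ∘ₗ S ∘ₗ LinearMap.mulLeft k v)
      (γ.toLinearMap ∘ₗ LinearMap.mulLeft k w)
      (γ.toLinearMap ∘ₗ S) b (repr := rb) (a₁ := rb1) (a₂ := rb2)
    have h2 := congr(μ3 $h)
    simpa only [map_sum, hμ3t, LinearMap.coe_comp, Function.comp_apply,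
      LinearMap.mulLeft_apply, AlgHom.toLinearMap_apply] using h2
  -- the central quantity
  set Q : A := ∑ j ∈ rb.index, ∑ q ∈ (rb2 j).index, ∑ i ∈ ra.index, ∑ p ∈ (ra2 i).index,
    γ (S (ra.left i * rb.left j)) *
      (γ ((ra2 i).left p * (rb2 j).left q) * γ (S ((ra2 i).right p))) *
        γ (S ((rb2 j).right q)) with hQ
  -- collapsing one antipode pair
  have coll : ∀ (c : H) (r : Coalgebra.Repr k c (H × H)),
      ∑ p ∈ r.index, γ (r.left p) * γ (S (r.right p)) = algebraMap k A (counit (R := k) c) := by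
    intro c r
    simp only [← map_mul, ← map_sum, hS]
    rw [HopfAlgebra.sum_mul_antipode_eq_algebraMap_counit r]
    exact γ.commutes _
  have collS : ∀ (c : H) (r : Coalgebra.Repr k c ((H × H) × (H × H))),
      ∑ p ∈ r.index, γ (S (r.left p)) * γ (r.right p) = algebraMap k A (counit (R := k) c) := by
    intro c r
    simp only [← map_mul, ← map_sum, hS]
    rw [HopfAlgebra.sum_antipode_mul_eq_algebraMap_counit r]
    exact γ.commutes _
  have ha_right : ∀ c : H,
      ∑ i ∈ ra.index, counit (R := k) (ra.right i) • γ (S (ra.left i * c)) = γ (S (a * c)) := by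
    intro c
    have h := congr((γ.toLinearMap ∘ₗ S ∘ₗ LinearMap.mulRight k c)
      $(repr_sum_counit_right_smul (k := k) ra))
    simpa only [map_sum, map_smul, LinearMap.coe_comp, Function.comp_apply,
      LinearMap.mulRight_apply, AlgHom.toLinearMap_apply] using h
  have hb_right : ∀ c : H,
      ∑ j ∈ rb.index, counit (R := k) (rb.right j) • γ (S (c * rb.left j)) = γ (S (c * b)) := by
    intro c
    have h := congr((γ.toLinearMap ∘ₗ S ∘ₗ LinearMap.mulLeft k c)
      $(repr_sum_counit_right_smul (k := k) rb))
    simpa only [map_sum, map_smul, LinearMap.coe_comp, Function.comp_apply,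
      LinearMap.mulLeft_apply, AlgHom.toLinearMap_apply] using h
  have ha_left : ∑ i ∈ ra.index, counit (R := k) (ra.left i) • γ (S (ra.right i)) = γ (S a) := by
    have h := congr((γ.toLinearMap ∘ₗ S) $(repr_sum_counit_left_smul (k := k) ra))
    simpa only [map_sum, map_smul, LinearMap.coe_comp, Function.comp_apply,
      AlgHom.toLinearMap_apply] using h
  have hb_left : ∑ j ∈ rb.index, counit (R := k) (rb.left j) • γ (S (rb.right j)) = γ (S b) := by
    have h := congr((γ.toLinearMap ∘ₗ S) $(repr_sum_counit_left_smul (k := k) rb))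
    simpa only [map_sum, map_smul, LinearMap.coe_comp, Function.comp_apply,
      AlgHom.toLinearMap_apply] using h
  -- First evaluation: Q = γ (S (a * b)).
  have evalA : Q = γ (S (a * b)) := by
    rw [hQ]
    calc ∑ j ∈ rb.index, ∑ q ∈ (rb2 j).index, ∑ i ∈ ra.index, ∑ p ∈ (ra2 i).index,
          γ (S (ra.left i * rb.left j)) *
            (γ ((ra2 i).left p * (rb2 j).left q) * γ (S ((ra2 i).right p))) *
              γ (S ((rb2 j).right q))
        = ∑ j ∈ rb.index, ∑ q ∈ (rb2 j).index, ∑ i ∈ ra.index,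
            (∑ p ∈ (ra2 i).index, γ ((ra2 i).left p) * γ (S ((ra2 i).right p))) *
              (γ (S (ra.left i * rb.left j)) * (γ ((rb2 j).left q) * γ (S ((rb2 j).right q)))) := by
          refine Finset.sum_congr rfl fun j _ => Finset.sum_congr rfl fun q _ =>
            Finset.sum_congr rfl fun i _ => ?_
          rw [Finset.sum_mul]
          exact Finset.sum_congr rfl fun p _ => by rw [map_mul γ ((ra2 i).left p) ((rb2 j).left q)]; ring
      _ = ∑ j ∈ rb.index, ∑ q ∈ (rb2 j).index,
            (∑ i ∈ ra.index, counit (R := k) (ra.right i) • γ (S (ra.left i * rb.left j))) *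
              (γ ((rb2 j).left q) * γ (S ((rb2 j).right q))) := by
          refine Finset.sum_congr rfl fun j _ => Finset.sum_congr rfl fun q _ => ?_
          rw [Finset.sum_mul]
          refine Finset.sum_congr rfl fun i _ => ?_
          rw [coll _ (ra2 i), ← Algebra.smul_def, smul_mul_assoc]
      _ = ∑ j ∈ rb.index, ∑ q ∈ (rb2 j).index,
            γ (S (a * rb.left j)) * (γ ((rb2 j).left q) * γ (S ((rb2 j).right q))) := by
          refine Finset.sum_congr rfl fun j _ => Finset.sum_congr rfl fun q _ => ?_
          rw [ha_right (rb.left j)]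
      _ = ∑ j ∈ rb.index, counit (R := k) (rb.right j) • γ (S (a * rb.left j)) := by
          refine Finset.sum_congr rfl fun j _ => ?_
          rw [← Finset.mul_sum, coll _ (rb2 j), mul_comm, ← Algebra.smul_def]
      _ = γ (S (a * b)) := hb_right a
  -- Second evaluation: Q = γ (S a) * γ (S b).
  have evalB : Q = γ (S a) * γ (S b) := by
    rw [hQ]
    calc ∑ j ∈ rb.index, ∑ q ∈ (rb2 j).index, ∑ i ∈ ra.index, ∑ p ∈ (ra2 i).index,
          γ (S (ra.left i * rb.left j)) *
            (γ ((ra2 i).left p * (rb2 j).left q) * γ (S ((ra2 i).right p))) *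
              γ (S ((rb2 j).right q))
        = ∑ j ∈ rb.index, ∑ q ∈ (rb2 j).index,
            (∑ i ∈ ra.index, ∑ p ∈ (ra2 i).index,
              γ (S (ra.left i * rb.left j)) *
                (γ ((ra2 i).left p * (rb2 j).left q) * γ (S ((ra2 i).right p)))) *
              γ (S ((rb2 j).right q)) := by
          refine Finset.sum_congr rfl fun j _ => Finset.sum_congr rfl fun q _ => ?_
          rw [Finset.sum_mul]
          exact Finset.sum_congr rfl fun i _ => (Finset.sum_mul _ _ _).symm
      _ = ∑ j ∈ rb.index, ∑ q ∈ (rb2 j).index,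
            (∑ i ∈ ra.index, ∑ p ∈ (ra1 i).index,
              γ (S ((ra1 i).left p * rb.left j)) *
                (γ ((ra1 i).right p * (rb2 j).left q) * γ (S (ra.right i)))) *
              γ (S ((rb2 j).right q)) := by
          refine Finset.sum_congr rfl fun j _ => Finset.sum_congr rfl fun q _ => ?_
          rw [key_a (rb.left j) ((rb2 j).left q)]
      _ = ∑ j ∈ rb.index, ∑ q ∈ (rb2 j).index, ∑ i ∈ ra.index, ∑ p ∈ (ra1 i).index,
            (γ (S ((ra1 i).left p * rb.left j)) *
              (γ ((ra1 i).right p * (rb2 j).left q) * γ (S ((rb2 j).right q)))) *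
                γ (S (ra.right i)) := by
          refine Finset.sum_congr rfl fun j _ => Finset.sum_congr rfl fun q _ => ?_
          rw [Finset.sum_mul]
          refine Finset.sum_congr rfl fun i _ => ?_
          rw [Finset.sum_mul]
          exact Finset.sum_congr rfl fun p _ => by ring
      _ = ∑ i ∈ ra.index, ∑ p ∈ (ra1 i).index, ∑ j ∈ rb.index, ∑ q ∈ (rb2 j).index,
            (γ (S ((ra1 i).left p * rb.left j)) *
              (γ ((ra1 i).right p * (rb2 j).left q) * γ (S ((rb2 j).right q)))) *
                γ (S (ra.right i)) :=
          sum4_comm _ _ _ _ _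
      _ = ∑ i ∈ ra.index, ∑ p ∈ (ra1 i).index,
            (∑ j ∈ rb.index, ∑ q ∈ (rb1 j).index,
              γ (S ((ra1 i).left p * (rb1 j).left q)) *
                (γ ((ra1 i).right p * (rb1 j).right q) * γ (S (rb.right j)))) *
              γ (S (ra.right i)) := by
          refine Finset.sum_congr rfl fun i _ => Finset.sum_congr rfl fun p _ => ?_
          simp only [← Finset.sum_mul]
          rw [show (∑ j ∈ rb.index, ∑ q ∈ (rb2 j).index,
              γ (S ((ra1 i).left p * rb.left j)) *
                (γ ((ra1 i).right p * (rb2 j).left q) * γ (S ((rb2 j).right q))))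
            = ∑ j ∈ rb.index, ∑ q ∈ (rb1 j).index,
              γ (S ((ra1 i).left p * (rb1 j).left q)) *
                (γ ((ra1 i).right p * (rb1 j).right q) * γ (S (rb.right j)))
            from key_b ((ra1 i).left p) ((ra1 i).right p)]
      _ = ∑ i ∈ ra.index, ∑ j ∈ rb.index, ∑ p ∈ (ra1 i).index, ∑ q ∈ (rb1 j).index,
            (γ (S ((ra1 i).left p * (rb1 j).left q)) *
              γ ((ra1 i).right p * (rb1 j).right q)) *
                (γ (S (rb.right j)) * γ (S (ra.right i))) := by
          refine Finset.sum_congr rfl fun i _ => ?_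
          rw [show (∑ p ∈ (ra1 i).index,
              (∑ j ∈ rb.index, ∑ q ∈ (rb1 j).index,
                γ (S ((ra1 i).left p * (rb1 j).left q)) *
                  (γ ((ra1 i).right p * (rb1 j).right q) * γ (S (rb.right j)))) *
                γ (S (ra.right i)))
            = ∑ p ∈ (ra1 i).index, ∑ j ∈ rb.index, ∑ q ∈ (rb1 j).index,
                (γ (S ((ra1 i).left p * (rb1 j).left q)) *
                  γ ((ra1 i).right p * (rb1 j).right q)) *
                    (γ (S (rb.right j)) * γ (S (ra.right i)))
            from Finset.sum_congr rfl fun p _ => by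
              rw [Finset.sum_mul]
              refine Finset.sum_congr rfl fun j _ => ?_
              rw [Finset.sum_mul]
              exact Finset.sum_congr rfl fun q _ => by ring]
          exact Finset.sum_comm
      _ = ∑ i ∈ ra.index, ∑ j ∈ rb.index,
            algebraMap k A (counit (R := k) (ra.left i * rb.left j)) *
              (γ (S (rb.right j)) * γ (S (ra.right i))) := by
          refine Finset.sum_congr rfl fun i _ => Finset.sum_congr rfl fun j _ => ?_
          simp only [← Finset.sum_mul]
          congr 1
          have h : ∑ pq ∈ (ra1 i).index ×ˢ (rb1 j).index,
              γ (S ((ra1 i).left pq.1 * (rb1 j).left pq.2)) *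
                γ ((ra1 i).right pq.1 * (rb1 j).right pq.2)
              = algebraMap k A (counit (R := k) (ra.left i * rb.left j)) :=
            collS _ (reprMul (ra1 i) (rb1 j))
          rw [Finset.sum_product] at h
          exact h
      _ = ∑ i ∈ ra.index, ∑ j ∈ rb.index,
            (counit (R := k) (ra.left i) • γ (S (ra.right i))) *
              (counit (R := k) (rb.left j) • γ (S (rb.right j))) := by
          refine Finset.sum_congr rfl fun i _ => Finset.sum_congr rfl fun j _ => ?_
          rw [Bialgebra.counit_mul, map_mul, Algebra.smul_def, Algebra.smul_def]
          ring
      _ = γ (S a) * γ (S b) := by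
          rw [← Finset.sum_mul_sum, ha_left, hb_left]
  rw [← evalA, evalB]

end AuxAntipode

/-- Let `H` be a graded connected Hopf algebra with grading operator
`Y` (`Y x = n • x` for `x` of degree `n`) whose coproduct respects the grading, and
let `γ : H → A` be a character with values in a commutative algebra `A`.  Then the
Dynkin-type element `R̃(γ) = γ^{⋆−1} ⋆ (γ ∘ Y) = (γ ∘ S) ⋆ (γ ∘ Y)` is an
infinitesimal character:
`R̃(γ)(x y) = ε(y) • R̃(γ)(x) + ε(x) • R̃(γ)(y)` for all `x y ∈ H`. -/
theorem dynkin_element_is_infinitesimal_character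
    (𝒜 : ℕ → Submodule k H) [GradedAlgebra 𝒜]
    (hconn : 𝒜 0 = Submodule.span k {(1 : H)})
    (hcomul : ∀ n : ℕ, ∀ x ∈ 𝒜 n, Coalgebra.comul (R := k) x ∈
      ⨆ p ∈ Finset.range (n + 1),
        LinearMap.range (TensorProduct.map (𝒜 p).subtype (𝒜 (n - p)).subtype))
    (Y : H →ₗ[k] H) (hY : ∀ n : ℕ, ∀ x ∈ 𝒜 n, Y x = (n : k) • x)
    (γ : H →ₐ[k] A) :
    ∀ x y : H,
      conv (γ.toLinearMap ∘ₗ HopfAlgebra.antipode (R := k)) (γ.toLinearMap ∘ₗ Y)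
          (x * y)
        = Coalgebra.counit (R := k) y •
            conv (γ.toLinearMap ∘ₗ HopfAlgebra.antipode (R := k))
              (γ.toLinearMap ∘ₗ Y) x
          + Coalgebra.counit (R := k) x •
            conv (γ.toLinearMap ∘ₗ HopfAlgebra.antipode (R := k))
              (γ.toLinearMap ∘ₗ Y) y := by
  classical
  -- Step 1: Y is a derivation.
  have hder : ∀ u v : H, Y (u * v) = Y u * v + u * Y v := by
    intro u v
    induction u using DirectSum.Decomposition.inductionOn 𝒜 with
    | zero => simp
    | homogeneous m =>
      obtain ⟨p, x, hx⟩ : ∃ p, ∃ x : 𝒜 p, (x : H) = m.1 := ⟨_, m, rfl⟩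
      induction v using DirectSum.Decomposition.inductionOn 𝒜 with
      | zero => simp
      | homogeneous m' =>
        obtain ⟨q, z, hz⟩ : ∃ q, ∃ z : 𝒜 q, (z : H) = m'.1 := ⟨_, m', rfl⟩
        rw [← hx, ← hz]
        have hxy : (x : H) * z ∈ 𝒜 (p + q) := SetLike.mul_mem_graded x.2 z.2
        rw [hY _ _ hxy, hY _ _ x.2, hY _ _ z.2]
        push_cast
        rw [add_smul, smul_mul_assoc, mul_smul_comm]
      | add v v' hv hv' =>
        simp only [mul_add, map_add, hv, hv']
        ring
    | add u u' hu hu' =>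
      simp only [add_mul, map_add, hu, hu']
      ring
  intro x y
  -- abbreviations
  set F : H ⊗[k] H →ₗ[k] A :=
    LinearMap.mul' k A ∘ₗ TensorProduct.map
      (γ.toLinearMap ∘ₗ HopfAlgebra.antipode (R := k)) (γ.toLinearMap ∘ₗ Y) with hF
  set G : H ⊗[k] H →ₗ[k] A :=
    LinearMap.mul' k A ∘ₗ TensorProduct.map
      (γ.toLinearMap ∘ₗ HopfAlgebra.antipode (R := k)) γ.toLinearMap with hG
  have hFt : ∀ t u : H, F (t ⊗ₜ u) = γ (HopfAlgebra.antipode (R := k) t) * γ (Y u) := by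
    intro t u; simp [hF]
  have hGt : ∀ t u : H, G (t ⊗ₜ u) = γ (HopfAlgebra.antipode (R := k) t) * γ u := by
    intro t u; simp [hG]
  -- Step 2: F is an (F,G)-derivation on H ⊗ H.
  have hFmul : ∀ c d : H ⊗[k] H, F (c * d) = F c * G d + G c * F d := by
    intro c d
    induction c with
    | zero => simp
    | tmul t u =>
      induction d with
      | zero => simp
      | tmul t' u' =>
        rw [Algebra.TensorProduct.tmul_mul_tmul, hFt, hFt, hFt, hGt, hGt,
          gamma_antipode_mul γ t t', hder u u', map_add, map_mul γ (Y u) u',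
          map_mul γ u (Y u')]
        ring
      | add d d' hd hd' =>
        simp only [mul_add, map_add, hd, hd']
        ring
    | add c c' hc hc' =>
      simp only [add_mul, map_add, hc, hc']
      ring
  -- Step 3: G ∘ comul = algebraMap ∘ counit.
  have hGmul : ∀ c : H ⊗[k] H,
      G c = γ (LinearMap.mul' k H
        ((HopfAlgebra.antipode (R := k)).rTensor H c)) := by
    intro c
    induction c with
    | zero => simp
    | tmul t u => simp [hGt]
    | add c c' hc hc' => simp [hc, hc']
  have hGcomul : ∀ z : H, G (Coalgebra.comul (R := k) z)
      = algebraMap k A (Coalgebra.counit (R := k) z) := by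
    intro z
    rw [hGmul, HopfAlgebra.mul_antipode_rTensor_comul_apply]
    exact γ.commutes _
  -- Conclusion.
  have hconv : ∀ z : H,
      conv (γ.toLinearMap ∘ₗ HopfAlgebra.antipode (R := k)) (γ.toLinearMap ∘ₗ Y) z
        = F (Coalgebra.comul (R := k) z) := fun z => rfl
  rw [hconv, hconv, hconv, Bialgebra.comul_mul, hFmul, hGcomul, hGcomul,
    Algebra.smul_def, Algebra.smul_def]
  ring
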